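/- Let φ be a stability function on an abelian length category A, and let M be a nonzero object admitting a maximally destabilizing quotient (N, p). Then N is φ-semistable, and (N, p) is unique up to isomorphism: if (N', p') is another maximally destabilizing quotient of M, then there is an isomorphism f : N → N' with p' = f ∘ p. -/

import Mathlib

open CategoryTheory CategoryTheory.Limits

universe u v

variable {C : Type u} [Category.{v} C] [Abelian C] {P : Type*} [LinearOrder P]

/-- The see-saw property for a stability function, on short exact sequences of nonzero objects. -/
def SeeSaw (φ : C → P) : Prop :=
  ∀ S : ShortComplex C, S.ShortExact →
    ¬ IsZero S.X₁ → ¬ IsZero S.X₂ → ¬ IsZero S.X₃ →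
    (φ S.X₁ < φ S.X₂ ∧ φ S.X₂ < φ S.X₃) ∨
    (φ S.X₃ < φ S.X₂ ∧ φ S.X₂ < φ S.X₁) ∨
    (φ S.X₁ = φ S.X₂ ∧ φ S.X₂ = φ S.X₃)

/-- A stability function is constant on isomorphism classes. -/
def IsoInvariant (φ : C → P) : Prop := ∀ ⦃M N : C⦄, (M ≅ N) → φ M = φ N

/-- `M` is φ-semistable: every nonzero proper subobject has phase ≤ φ M. -/
def Semistable (φ : C → P) (M : C) : Prop :=
  ∀ ⦃L : C⦄ (i : L ⟶ M), Mono i → ¬ IsZero L → ¬ IsIso i → φ L ≤ φ M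

/-- `M` is φ-stable: every nonzero proper subobject has phase < φ M. -/
def Stable (φ : C → P) (M : C) : Prop :=
  ∀ ⦃L : C⦄ (i : L ⟶ M), Mono i → ¬ IsZero L → ¬ IsIso i → φ L < φ M

/-- `(N, q)` is a maximally destabilizing quotient of `M`. -/
def IsMDQ (φ : C → P) {M N : C} (q : M ⟶ N) : Prop :=
  Epi q ∧ ¬ IsZero N ∧ φ N ≤ φ M ∧
    ∀ ⦃N' : C⦄ (q' : M ⟶ N'), Epi q' → ¬ IsZero N' →
      φ N ≤ φ N' ∧ (φ N' = φ N → ∃ f : N ⟶ N', q' = q ≫ f)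

/-- `(L, i)` is a maximally destabilizing subobject of `M`. -/
def IsMDS (φ : C → P) {M L : C} (i : L ⟶ M) : Prop :=
  Mono i ∧ ¬ IsZero L ∧ φ M ≤ φ L ∧
    ∀ ⦃L' : C⦄ (i' : L' ⟶ M), Mono i' → ¬ IsZero L' →
      φ L' ≤ φ L ∧ (φ L' = φ L → ∃ f : L' ⟶ L, i' = f ≫ i)

theorem mdq_semistable_and_unique {C : Type u} [Category.{v} C] [Abelian C]
    [∀ X : C, IsNoetherianObject X] [∀ X : C, IsArtinianObject X]
    {P : Type*} [LinearOrder P] (φ : C → P)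
    (hss : SeeSaw φ) (hiso : IsoInvariant φ)
    {M N : C} (hM : ¬ IsZero M) (q : M ⟶ N) (hq : IsMDQ φ q) :
    Semistable φ N ∧
      ∀ ⦃N' : C⦄ (q' : M ⟶ N'), IsMDQ φ q' → ∃ f : N ⟶ N', IsIso f ∧ q' = q ≫ f := by
  obtain ⟨hqe, hN, hNM, hmax⟩ := hq
  constructor
  · intro L i hmono hL hni
    haveI := hmono
    -- cokernel
    have hcoker : ¬ IsZero (cokernel i) := by
      intro hz
      haveI : Epi i := Preadditive.epi_of_isZero_cokernel i hz
      exact hni (isIso_of_mono_of_epi i)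
    set S : ShortComplex C := ShortComplex.mk i (cokernel.π i) (cokernel.condition i)
    have hSE : S.ShortExact := by
      apply ShortComplex.ShortExact.mk'
      · exact S.exact_of_g_is_cokernel (cokernelIsCokernel i)
      · exact hmono
      · dsimp [S]; infer_instance
    have hepi : Epi (q ≫ cokernel.π i) := epi_comp _ _
    have h1 := (hmax (q ≫ cokernel.π i) hepi hcoker).1
    rcases hss S hSE hL hN hcoker with ⟨h, _⟩ | ⟨h2, _⟩ | ⟨h, _⟩
    · exact le_of_lt h
    · exact absurd h1 (not_le.mpr h2)
    · exact le_of_eq h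
  · intro N' q' hq'
    obtain ⟨hqe', hN', hNM', hmax'⟩ := hq'
    have h1 := (hmax q' hqe' hN').1
    have h2 := (hmax' q hqe hN).1
    have heq : φ N' = φ N := le_antisymm h2 h1
    obtain ⟨f, hf⟩ := (hmax q' hqe' hN').2 heq
    obtain ⟨g, hg⟩ := (hmax' q hqe hN).2 heq.symm
    refine ⟨f, ?_, hf⟩
    have hfg : f ≫ g = 𝟙 N := by
      haveI := hqe
      rw [← cancel_epi q, ← Category.assoc, ← hf, ← hg, Category.comp_id]
    have hgf : g ≫ f = 𝟙 N' := by
      haveI := hqe'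
      rw [← cancel_epi q', ← Category.assoc, ← hg, ← hf, Category.comp_id]
    exact ⟨⟨g, hfg, hgf⟩⟩
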